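/- The MLE of the covariance matrix: for f(R) = det^{-n}(R) exp(−Tr[R^{-1} S]) with S Hermitian positive definite and n > 0, the unique maximizer over Hermitian positive definite R is R̂ = S/n, and the maximum value is det^{-n}(S/n) e^{-nm}. -/

import Mathlib

open Matrix
open scoped ComplexOrder

lemma stmt8_scalar_le {n x : ℝ} (hn : 0 < n) (hx : 0 < x) :
    n * Real.log x - x ≤ n * Real.log n - n := by
  have h := Real.log_le_sub_one_of_pos (div_pos hx hn)
  rw [Real.log_div hx.ne' hn.ne'] at h
  have h2 : n * (Real.log x - Real.log n) ≤ n * (x / n - 1) :=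
    mul_le_mul_of_nonneg_left h hn.le
  have h3 : n * (x / n - 1) = x - n := by field_simp
  linarith [h3 ▸ h2]

lemma stmt8_scalar_lt {n x : ℝ} (hn : 0 < n) (hx : 0 < x) (hne : x ≠ n) :
    n * Real.log x - x < n * Real.log n - n := by
  have h := Real.log_lt_sub_one_of_pos (div_pos hx hn) (by
    simp [div_eq_one_iff_eq hn.ne', hne])
  rw [Real.log_div hx.ne' hn.ne'] at h
  have h2 : n * (Real.log x - Real.log n) < n * (x / n - 1) :=
    mul_lt_mul_of_pos_left h hn
  have h3 : n * (x / n - 1) = x - n := by field_simp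
  linarith [h3 ▸ h2]

lemma stmt8_key {m : ℕ} {n : ℝ} (hn : 0 < n) {T : Matrix (Fin m) (Fin m) ℂ} (hT : T.PosDef) :
    T.det.re ^ n * Real.exp (-T.trace.re) ≤ n ^ (n * m) * Real.exp (-(n * m)) ∧
    (T.det.re ^ n * Real.exp (-T.trace.re) = n ^ (n * m) * Real.exp (-(n * m)) →
      T = (n : ℂ) • 1) := by
  have hpos : ∀ i, 0 < hT.isHermitian.eigenvalues i := hT.eigenvalues_pos
  set μ := hT.isHermitian.eigenvalues with hμ
  have hdet : T.det.re = ∏ i, μ i := by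
    rw [hT.isHermitian.det_eq_prod_eigenvalues]; norm_cast
  have htr : T.trace.re = ∑ i, μ i := by
    have h1 : T.trace = ∑ i, (μ i : ℂ) := by
      conv_lhs => rw [hT.isHermitian.spectral_theorem]
      rw [Unitary.conjStarAlgAut_apply, Matrix.trace_mul_cycle]
      have hu : (star (hT.isHermitian.eigenvectorUnitary : Matrix (Fin m) (Fin m) ℂ)) *
          (hT.isHermitian.eigenvectorUnitary : Matrix (Fin m) (Fin m) ℂ) = 1 :=
        hT.isHermitian.eigenvectorUnitary.2.1
      rw [hu, one_mul, trace_diagonal]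
      rfl
    rw [h1]; norm_cast
  have hdetpos : 0 < ∏ i, μ i := Finset.prod_pos fun i _ => hpos i
  have hL : T.det.re ^ n * Real.exp (-T.trace.re)
      = Real.exp (∑ i, (n * Real.log (μ i) - μ i)) := by
    rw [hdet, htr, Real.rpow_def_of_pos hdetpos,
      Real.log_prod (fun i _ => (hpos i).ne'), ← Real.exp_add]
    congr 1
    rw [Finset.sum_sub_distrib, ← Finset.mul_sum]
    ring_nf
  have hR : (n:ℝ) ^ (n * m) * Real.exp (-(n * m))
      = Real.exp (∑ _i : Fin m, (n * Real.log n - n)) := by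
    rw [Real.rpow_def_of_pos hn, ← Real.exp_add, Finset.sum_const, Finset.card_univ,
      Fintype.card_fin, nsmul_eq_mul]
    congr 1; ring_nf
  constructor
  · rw [hL, hR]
    exact Real.exp_le_exp.mpr (Finset.sum_le_sum fun i _ => stmt8_scalar_le hn (hpos i))
  · intro h
    rw [hL, hR] at h
    have hsum := Real.exp_eq_exp.mp h
    have hall : ∀ i, μ i = n := by
      by_contra hc
      push_neg at hc
      obtain ⟨i, hi⟩ := hc
      exact absurd hsum (Finset.sum_lt_sum (fun j _ => stmt8_scalar_le hn (hpos j))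
        ⟨i, Finset.mem_univ i, stmt8_scalar_lt hn (hpos i) hi⟩).ne
    have hdiag : diagonal (RCLike.ofReal ∘ μ : Fin m → ℂ) = (n:ℂ) • 1 := by
      have hfun : (RCLike.ofReal ∘ μ : Fin m → ℂ) = fun _ => (n:ℂ) :=
        funext fun i => by simp [hall i]
      rw [hfun, smul_one_eq_diagonal]
    calc T = _ := hT.isHermitian.spectral_theorem
    _ = (n:ℂ) • 1 := by
      rw [hdiag, Unitary.conjStarAlgAut_apply, mul_smul_comm, smul_mul_assoc, mul_one,
        hT.isHermitian.eigenvectorUnitary.2.2]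

lemma stmt8_det_re_pos {k : ℕ} {A : Matrix (Fin k) (Fin k) ℂ} (hA : A.PosDef) :
    0 < A.det.re ∧ A.det = (A.det.re : ℂ) := by
  have h := hA.det_pos
  rw [Complex.lt_def] at h
  exact ⟨h.1, Complex.ext rfl (by simpa using h.2.symm)⟩

lemma stmt8_det_isUnit {k : ℕ} {A : Matrix (Fin k) (Fin k) ℂ} (hA : A.PosDef) : IsUnit A.det :=
  isUnit_iff_ne_zero.mpr (fun h => by
    have := (stmt8_det_re_pos hA).1
    rw [h] at this
    simp at this)

lemma stmt8_conj_posDef {k : ℕ} {Q A : Matrix (Fin k) (Fin k) ℂ} (hQ : Q.IsHermitian)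
    (hQu : IsUnit Q.det) (hA : A.PosDef) : (Q * A * Q).PosDef := by
  rw [posDef_iff_dotProduct_mulVec]
  refine ⟨?_, ?_⟩
  · show (Q * A * Q)ᴴ = Q * A * Q
    rw [conjTranspose_mul, conjTranspose_mul, hQ.eq, hA.isHermitian.eq, ← mul_assoc]
  · intro x hx
    have hQx : Q *ᵥ x ≠ 0 := by
      intro h
      apply hx
      have hinj := Matrix.mulVec_injective_iff_isUnit.mpr
        ((Matrix.isUnit_iff_isUnit_det _).mpr hQu)
      exact hinj (by simpa using h)
    have hcalc : star x ⬝ᵥ (Q * A * Q) *ᵥ x = star (Q *ᵥ x) ⬝ᵥ A *ᵥ (Q *ᵥ x) := by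
      rw [← mulVec_mulVec, ← mulVec_mulVec, dotProduct_mulVec, star_mulVec, hQ.eq]
    rw [hcalc]
    exact hA.dotProduct_mulVec_pos hQx

open scoped MatrixOrder in
lemma stmt8_sqrt {k : ℕ} {S : Matrix (Fin k) (Fin k) ℂ} (hS : S.PosDef) :
    ∃ Q : Matrix (Fin k) (Fin k) ℂ, Q * Q = S ∧ Q.IsHermitian :=
  ⟨CFC.sqrt S, CFC.sqrt_mul_sqrt_self S hS.posSemidef.nonneg,
    (CFC.sqrt_nonneg S).posSemidef.isHermitian⟩

/-- the MLE of the covariance matrix. The unique maximizer of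
`f(R) = det⁻ⁿ(R) exp(-Tr[R⁻¹S])` over Hermitian positive definite `R` is `R̂ = S/n`,
with maximum value `det⁻ⁿ(S/n) e^{-nm}`. -/
theorem stmt8 {m : ℕ} (S : Matrix (Fin m) (Fin m) ℂ) (hS : S.PosDef)
    (n : ℝ) (hn : 0 < n)
    (f : Matrix (Fin m) (Fin m) ℂ → ℝ)
    (hf : ∀ R : Matrix (Fin m) (Fin m) ℂ,
      f R = (R.det.re) ^ (-n) * Real.exp (-(trace (R⁻¹ * S)).re))
    (Rhat : Matrix (Fin m) (Fin m) ℂ) (hRhat : Rhat = ((n : ℂ))⁻¹ • S) :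
    (∀ R : Matrix (Fin m) (Fin m) ℂ, R.PosDef → f R ≤ f Rhat) ∧
    (∀ R : Matrix (Fin m) (Fin m) ℂ, R.PosDef → f R = f Rhat → R = Rhat) ∧
    f Rhat = (Rhat.det.re) ^ (-n) * Real.exp (-(n * m)) := by
  subst hRhat
  have hSre := (stmt8_det_re_pos hS).1
  have hSdet := (stmt8_det_re_pos hS).2
  have hSu := stmt8_det_isUnit hS
  have hnC : (n:ℂ) ≠ 0 := by exact_mod_cast hn.ne'
  obtain ⟨Q, hQQ, hQh⟩ := stmt8_sqrt hS
  have hQu : IsUnit Q.det := by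
    refine isUnit_iff_ne_zero.mpr fun h => hSu.ne_zero ?_
    rw [← hQQ, det_mul, h, mul_zero]
  have hRhatinv : ((n:ℂ)⁻¹ • S)⁻¹ = (n:ℂ) • S⁻¹ := by
    refine inv_eq_right_inv ?_
    rw [smul_mul_assoc, mul_smul_comm, smul_smul, inv_mul_cancel₀ hnC, one_smul,
      mul_nonsing_inv _ hSu]
  have htrRhat : (trace ((((n:ℂ)⁻¹ • S))⁻¹ * S)).re = n * m := by
    rw [hRhatinv, smul_mul_assoc, nonsing_inv_mul _ hSu, trace_smul, trace_one]
    simp [smul_eq_mul, Complex.mul_re]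
  have hdetRhat : ((n:ℂ)⁻¹ • S).det.re = (n⁻¹:ℝ)^m * S.det.re := by
    rw [det_smul, hSdet]
    simp only [Fintype.card_fin, ← Complex.ofReal_inv, ← Complex.ofReal_pow,
      ← Complex.ofReal_mul, Complex.ofReal_re]
  have hRhatU : IsUnit ((n:ℂ)⁻¹ • S).det := by
    rw [det_smul]
    exact (isUnit_iff_ne_zero.mpr (pow_ne_zero _ (inv_ne_zero hnC))).mul hSu
  have hQSQ : Q * S⁻¹ * Q = 1 := by
    rw [← hQQ, Matrix.mul_inv_rev, ← mul_assoc, mul_nonsing_inv _ hQu, one_mul,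
      nonsing_inv_mul _ hQu]
  have cancelQ : ∀ X Y : Matrix (Fin m) (Fin m) ℂ, Q * X * Q = Q * Y * Q → X = Y := by
    intro X Y h
    have c : ∀ Z : Matrix (Fin m) (Fin m) ℂ, Q⁻¹ * (Q * Z * Q) * Q⁻¹ = Z := by
      intro Z
      simp only [← mul_assoc]
      rw [nonsing_inv_mul _ hQu, one_mul, mul_assoc, mul_nonsing_inv _ hQu, mul_one]
    rw [← c X, h, c Y]
  -- rpow computations
  have hx : ∀ {a b : ℝ}, 0 < a → 0 < b → a ^ (-n) * ((a / b) ^ n) = b ^ (-n) := by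
    intro a b ha hb
    rw [Real.div_rpow ha.le hb.le, Real.rpow_neg ha.le, Real.rpow_neg hb.le,
      div_eq_mul_inv, ← mul_assoc, inv_mul_cancel₀ (Real.rpow_pos_of_pos ha n).ne', one_mul]
  have hpowm : (n⁻¹:ℝ)^m = n ^ (-(m:ℝ)) := by
    rw [Real.rpow_neg hn.le, Real.rpow_natCast, inv_pow]
  have hval : ((n⁻¹:ℝ)^m * S.det.re) ^ (-n) = S.det.re ^ (-n) * n ^ (n * (m:ℝ)) := by
    rw [hpowm, Real.mul_rpow (Real.rpow_nonneg hn.le _) hSre.le, ← Real.rpow_mul hn.le,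
      mul_comm]
    congr 1
    ring_nf
  have hfRhat : f ((n:ℂ)⁻¹ • S)
      = S.det.re ^ (-n) * ((n:ℝ) ^ (n * (m:ℝ)) * Real.exp (-(n * m))) := by
    rw [hf, htrRhat, hdetRhat, hval, mul_assoc]
  -- facts about a general posdef R
  have perR : ∀ R : Matrix (Fin m) (Fin m) ℂ, R.PosDef →
      (Q * R⁻¹ * Q).PosDef ∧
      f R = S.det.re ^ (-n) *
        ((Q * R⁻¹ * Q).det.re ^ n * Real.exp (-(Q * R⁻¹ * Q).trace.re)) := by
    intro R hR
    have hRre := (stmt8_det_re_pos hR).1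
    have hRdet := (stmt8_det_re_pos hR).2
    have hRu := stmt8_det_isUnit hR
    have hTpd : (Q * R⁻¹ * Q).PosDef := stmt8_conj_posDef hQh hQu hR.inv
    have htrT : (Q * R⁻¹ * Q).trace = trace (R⁻¹ * S) := by
      rw [trace_mul_cycle, hQQ, trace_mul_comm]
    have hdetT : (Q * R⁻¹ * Q).det = ((S.det.re / R.det.re : ℝ) : ℂ) := by
      rw [det_mul, det_mul, mul_comm Q.det R⁻¹.det, mul_assoc, ← det_mul, hQQ,
        det_nonsing_inv, Ring.inverse_eq_inv, hSdet, hRdet, Complex.ofReal_div]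
      simp only [Complex.ofReal_re]
      ring
    have hdetTre : (Q * R⁻¹ * Q).det.re = S.det.re / R.det.re := by
      rw [hdetT, Complex.ofReal_re]
    refine ⟨hTpd, ?_⟩
    rw [hf, ← htrT, hdetTre, ← hx hSre hRre, mul_assoc]
  refine ⟨?_, ?_, ?_⟩
  · intro R hR
    obtain ⟨hTpd, hfR⟩ := perR R hR
    rw [hfR, hfRhat]
    exact mul_le_mul_of_nonneg_left (stmt8_key hn hTpd).1 (Real.rpow_nonneg hSre.le _)
  · intro R hR h
    obtain ⟨hTpd, hfR⟩ := perR R hR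
    have hRu := stmt8_det_isUnit hR
    rw [hfR, hfRhat] at h
    have h2 := mul_left_cancel₀ (Real.rpow_pos_of_pos hSre (-n)).ne' h
    have hT1 := (stmt8_key hn hTpd).2 h2
    have hRhatT : Q * ((n:ℂ)⁻¹ • S)⁻¹ * Q = (n:ℂ) • 1 := by
      rw [hRhatinv, mul_smul_comm, smul_mul_assoc, hQSQ]
    have hinv : R⁻¹ = ((n:ℂ)⁻¹ • S)⁻¹ := cancelQ _ _ (hT1.trans hRhatT.symm)
    rw [← nonsing_inv_nonsing_inv R hRu, hinv, nonsing_inv_nonsing_inv _ hRhatU]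
  · rw [hf, htrRhat]
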